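/- For every closed Proc term p of deACPei there exists a head normal form q such that the equation p = q is derivable from the axioms of deACPei. Here the set of head normal forms is the least set of closed Proc terms containing δ, containing φ:→ε for every closed Cond term φ, containing φ:→(α·p') for every closed Cond term φ, every action α, and every closed Proc term p', and closed under alternative composition +. -/

import Mathlib

namespace DeACPei

/-- Flexible variables: a countably infinite set. -/
abbrev FlexVar := ℕ

/-- A data signature: function symbols with arities and relation symbols with arities
(relation symbols other than equality are only used where the context provides them). -/
structure DataSig where
  F : Type
  ar : F → ℕ
  R : Type
  rar : R → ℕ

/-- Data terms: logical data variables, flexible variables (as constants of sort Data),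
and applications of function symbols. -/
inductive DTerm (S : DataSig) : Type where
  | dvar : ℕ → DTerm S
  | fvar : FlexVar → DTerm S
  | app : (f : S.F) → (Fin (S.ar f) → DTerm S) → DTerm S

/-- An algebra for a data signature. -/
structure DataAlg (S : DataSig) where
  D : Type
  interpF : (f : S.F) → (Fin (S.ar f) → D) → D
  interpR : (r : S.R) → (Fin (S.rar r) → D) → Prop

variable {S : DataSig}

namespace DTerm

/-- No (logical) data variables occur. -/
def NoDVar : DTerm S → Prop
  | dvar _ => False
  | fvar _ => True
  | app _ ts => ∀ i, (ts i).NoDVar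

/-- No flexible variables occur. -/
def NoFVar : DTerm S → Prop
  | dvar _ => True
  | fvar _ => False
  | app _ ts => ∀ i, (ts i).NoFVar

/-- A data value: a closed term over the data signature proper. -/
def IsVal (e : DTerm S) : Prop := e.NoDVar ∧ e.NoFVar

/-- The flexible variables occurring in a data term. -/
def fvars : DTerm S → Finset FlexVar
  | dvar _ => ∅
  | fvar v => {v}
  | app _ ts => Finset.univ.sup fun i => (ts i).fvars

/-- The (logical) data variables occurring in a data term. -/
def dvars : DTerm S → Finset ℕ
  | dvar n => {n}
  | fvar _ => ∅
  | app _ ts => Finset.univ.sup fun i => (ts i).dvars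

/-- Evaluation of a data term in an algebra, given assignments for the data variables
and the flexible variables. -/
def evalD (A : DataAlg S) (ν : ℕ → A.D) (μ : FlexVar → A.D) : DTerm S → A.D
  | dvar n => ν n
  | fvar v => μ v
  | app f ts => A.interpF f fun i => (ts i).evalD A ν μ

/-- Substitute the flexible variable `v` by the data term `t`. -/
def substFV (v : FlexVar) (t : DTerm S) : DTerm S → DTerm S
  | dvar n => dvar n
  | fvar w => if w = v then t else fvar w
  | app f ts => app f fun i => substFV v t (ts i)

/-- Substitute data variables according to `θ`. -/
def substDV (θ : ℕ → DTerm S) : DTerm S → DTerm S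
  | dvar n => θ n
  | fvar w => fvar w
  | app f ts => app f fun i => (ts i).substDV θ

end DTerm

/-- The set of data values. -/
def DVal (S : DataSig) := { e : DTerm S // e.IsVal }

/-- An evaluation map: a function from flexible variables to data values or flexible
variables (`none` meaning that the variable is mapped to itself, i.e. unevaluated). -/
def EvalMap (S : DataSig) := FlexVar → Option (DVal S)

/-- Extension of an evaluation map to data terms. -/
def DTerm.applyEval (σ : EvalMap S) : DTerm S → DTerm S
  | .dvar n => .dvar n
  | .fvar v => match σ v with
      | some t => t.val
      | none => .fvar v
  | .app f ts => .app f fun i => (ts i).applyEval σ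

open Classical in
/-- `σ[t/v]`: the evaluation map updated to send `v` to `t`. -/
noncomputable def EvalMap.upd (σ : EvalMap S) (v : FlexVar) (t : DTerm S) : EvalMap S :=
  fun w => if w = v then (if h : t.IsVal then some ⟨t, h⟩ else none) else σ w

/-- A `V`-evaluation map: `σ v` is a data value iff `v ∈ V`. -/
def EvalMap.IsVMap (σ : EvalMap S) (V : Finset FlexVar) : Prop :=
  ∀ v, (σ v).isSome ↔ v ∈ V

/-- Conditions: condition variables, equality of data terms, relation symbols, truth,
falsity, the usual connectives, and quantification over data (binding a data variable). -/
inductive CTerm (S : DataSig) : Type where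
  | cvar : ℕ → CTerm S
  | eq : DTerm S → DTerm S → CTerm S
  | rel : (r : S.R) → (Fin (S.rar r) → DTerm S) → CTerm S
  | tt : CTerm S
  | ff : CTerm S
  | not : CTerm S → CTerm S
  | and : CTerm S → CTerm S → CTerm S
  | or : CTerm S → CTerm S → CTerm S
  | imp : CTerm S → CTerm S → CTerm S
  | all : ℕ → CTerm S → CTerm S
  | ex : ℕ → CTerm S → CTerm S

namespace CTerm

/-- No condition variables occur. -/
def NoCVar : CTerm S → Prop
  | cvar _ => False
  | eq _ _ => True
  | rel _ _ => True
  | tt => True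
  | ff => True
  | not φ => φ.NoCVar
  | and φ ψ => φ.NoCVar ∧ ψ.NoCVar
  | or φ ψ => φ.NoCVar ∧ ψ.NoCVar
  | imp φ ψ => φ.NoCVar ∧ ψ.NoCVar
  | all _ φ => φ.NoCVar
  | ex _ φ => φ.NoCVar

/-- The free (logical) data variables of a condition. -/
def fdvars : CTerm S → Finset ℕ
  | cvar _ => ∅
  | eq e e' => e.dvars ∪ e'.dvars
  | rel _ ts => Finset.univ.sup fun i => (ts i).dvars
  | tt => ∅
  | ff => ∅
  | not φ => φ.fdvars
  | and φ ψ => φ.fdvars ∪ ψ.fdvars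
  | or φ ψ => φ.fdvars ∪ ψ.fdvars
  | imp φ ψ => φ.fdvars ∪ ψ.fdvars
  | all n φ => φ.fdvars.erase n
  | ex n φ => φ.fdvars.erase n

/-- The flexible variables occurring in a condition. -/
def fvars : CTerm S → Finset FlexVar
  | cvar _ => ∅
  | eq e e' => e.fvars ∪ e'.fvars
  | rel _ ts => Finset.univ.sup fun i => (ts i).fvars
  | tt => ∅
  | ff => ∅
  | not φ => φ.fvars
  | and φ ψ => φ.fvars ∪ ψ.fvars
  | or φ ψ => φ.fvars ∪ ψ.fvars
  | imp φ ψ => φ.fvars ∪ ψ.fvars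
  | all _ φ => φ.fvars
  | ex _ φ => φ.fvars

/-- A closed condition: no condition variables and no free data variables
(flexible variables may occur). -/
def Closed (φ : CTerm S) : Prop := φ.NoCVar ∧ φ.fdvars = ∅

/-- Satisfaction of a condition in a data algebra, given assignments for the data
variables and the flexible variables (flexible variables being read as data variables);
condition variables are never satisfied. -/
def holds (A : DataAlg S) (μ : FlexVar → A.D) : (ν : ℕ → A.D) → CTerm S → Prop
  | _, cvar _ => False
  | ν, eq e e' => e.evalD A ν μ = e'.evalD A ν μ
  | ν, rel r ts => A.interpR r fun i => (ts i).evalD A ν μ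
  | _, tt => True
  | _, ff => False
  | ν, not φ => ¬ holds A μ ν φ
  | ν, and φ ψ => holds A μ ν φ ∧ holds A μ ν ψ
  | ν, or φ ψ => holds A μ ν φ ∨ holds A μ ν ψ
  | ν, imp φ ψ => holds A μ ν φ → holds A μ ν ψ
  | ν, all n φ => ∀ d, holds A μ (Function.update ν n d) φ
  | ν, ex n φ => ∃ d, holds A μ (Function.update ν n d) φ

/-- Extension of an evaluation map to conditions. -/
def applyEval (σ : EvalMap S) : CTerm S → CTerm S
  | cvar n => cvar n
  | eq e e' => eq (e.applyEval σ) (e'.applyEval σ)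
  | rel r ts => rel r fun i => (ts i).applyEval σ
  | tt => tt
  | ff => ff
  | not φ => not (φ.applyEval σ)
  | and φ ψ => and (φ.applyEval σ) (ψ.applyEval σ)
  | or φ ψ => or (φ.applyEval σ) (ψ.applyEval σ)
  | imp φ ψ => imp (φ.applyEval σ) (ψ.applyEval σ)
  | all n φ => all n (φ.applyEval σ)
  | ex n φ => ex n (φ.applyEval σ)

/-- Substitute the flexible variable `v` by the data term `t` in a condition. -/
def substFV (v : FlexVar) (t : DTerm S) : CTerm S → CTerm S
  | cvar n => cvar n
  | eq e e' => eq (e.substFV v t) (e'.substFV v t)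
  | rel r ts => rel r fun i => (ts i).substFV v t
  | tt => tt
  | ff => ff
  | not φ => not (φ.substFV v t)
  | and φ ψ => and (φ.substFV v t) (ψ.substFV v t)
  | or φ ψ => or (φ.substFV v t) (ψ.substFV v t)
  | imp φ ψ => imp (φ.substFV v t) (ψ.substFV v t)
  | all n φ => all n (φ.substFV v t)
  | ex n φ => ex n (φ.substFV v t)

/-- Substitute data variables according to `θ` in a condition (capture is avoided since
`θ` is only used with closed data terms). -/
def substDV (θ : ℕ → DTerm S) : CTerm S → CTerm S
  | cvar n => cvar n
  | eq e e' => eq (e.substDV θ) (e'.substDV θ)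
  | rel r ts => rel r fun i => (ts i).substDV θ
  | tt => tt
  | ff => ff
  | not φ => not (φ.substDV θ)
  | and φ ψ => and (φ.substDV θ) (ψ.substDV θ)
  | or φ ψ => or (φ.substDV θ) (ψ.substDV θ)
  | imp φ ψ => imp (φ.substDV θ) (ψ.substDV θ)
  | all n φ => all n (φ.substDV (Function.update θ n (.dvar n)))
  | ex n φ => ex n (φ.substDV (Function.update θ n (.dvar n)))

end CTerm

/-- A condition is satisfiable in the data algebra (flexible variables read as
data variables). -/
def SatC (A : DataAlg S) (φ : CTerm S) : Prop :=
  ∃ (μ : FlexVar → A.D) (ν : ℕ → A.D), φ.holds A μ ν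

end DeACPei
namespace DeACPei

variable {S : DataSig}

/-- Process terms of deACPei over a set `Act` of basic actions and a data signature. -/
inductive PTerm (Act : Type) (S : DataSig) : Type where
  | pvar : ℕ → PTerm Act S
  | delta : PTerm Act S
  | eps : PTerm Act S
  | act : Act → PTerm Act S
  | pact : Act → (n : ℕ) → (Fin n → DTerm S) → PTerm Act S
  | assign : FlexVar → DTerm S → PTerm Act S
  | alt : PTerm Act S → PTerm Act S → PTerm Act S
  | seq : PTerm Act S → PTerm Act S → PTerm Act S
  | iter : PTerm Act S → PTerm Act S → PTerm Act S
  | par : PTerm Act S → PTerm Act S → PTerm Act S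
  | lm : PTerm Act S → PTerm Act S → PTerm Act S
  | cm : PTerm Act S → PTerm Act S → PTerm Act S
  | encap : Set Act → PTerm Act S → PTerm Act S
  | gc : CTerm S → PTerm Act S → PTerm Act S
  | eval : EvalMap S → PTerm Act S → PTerm Act S

variable {Act : Type}

/-- Interpretation of the constants of `A ∪ {δ}`. -/
def actd : Option Act → PTerm Act S
  | none => .delta
  | some a => .act a

namespace PTerm

/-- A closed process term: no process variables, and all occurring data terms and
conditions are closed. -/
def Closed : PTerm Act S → Prop
  | pvar _ => False
  | delta => True
  | eps => True
  | act _ => True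
  | pact _ _ es => ∀ i, (es i).NoDVar
  | assign _ e => e.NoDVar
  | alt p q => p.Closed ∧ q.Closed
  | seq p q => p.Closed ∧ q.Closed
  | iter p q => p.Closed ∧ q.Closed
  | par p q => p.Closed ∧ q.Closed
  | lm p q => p.Closed ∧ q.Closed
  | cm p q => p.Closed ∧ q.Closed
  | encap _ p => p.Closed
  | gc φ p => φ.Closed ∧ p.Closed
  | eval _ p => p.Closed

/-- No evaluation operator, left merge or communication merge occurs. -/
def NoELC : PTerm Act S → Prop
  | pvar _ => True
  | delta => True
  | eps => True
  | act _ => True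
  | pact _ _ _ => True
  | assign _ _ => True
  | alt p q => p.NoELC ∧ q.NoELC
  | seq p q => p.NoELC ∧ q.NoELC
  | iter p q => p.NoELC ∧ q.NoELC
  | par p q => p.NoELC ∧ q.NoELC
  | lm _ _ => False
  | cm _ _ => False
  | encap _ p => p.NoELC
  | gc _ p => p.NoELC
  | eval _ _ => False

/-- `FVar(p)`: the flexible variables occurring in a process term. -/
def fvars : PTerm Act S → Finset FlexVar
  | pvar _ => ∅
  | delta => ∅
  | eps => ∅
  | act _ => ∅
  | pact _ _ es => Finset.univ.sup fun i => (es i).fvars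
  | assign v e => {v} ∪ e.fvars
  | alt p q => p.fvars ∪ q.fvars
  | seq p q => p.fvars ∪ q.fvars
  | iter p q => p.fvars ∪ q.fvars
  | par p q => p.fvars ∪ q.fvars
  | lm p q => p.fvars ∪ q.fvars
  | cm p q => p.fvars ∪ q.fvars
  | encap _ p => p.fvars
  | gc φ p => φ.fvars ∪ p.fvars
  | eval _ p => p.fvars

/-- `FAss(p)`: the flexible variables occurring in assignment position in a process
term. -/
def fass : PTerm Act S → Finset FlexVar
  | pvar _ => ∅
  | delta => ∅
  | eps => ∅
  | act _ => ∅
  | pact _ _ _ => ∅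
  | assign v _ => {v}
  | alt p q => p.fass ∪ q.fass
  | seq p q => p.fass ∪ q.fass
  | iter p q => p.fass ∪ q.fass
  | par p q => p.fass ∪ q.fass
  | lm p q => p.fass ∪ q.fass
  | cm p q => p.fass ∪ q.fass
  | encap _ p => p.fass
  | gc _ p => p.fass
  | eval _ p => p.fass

end PTerm

/-- An H-term: a closed process term in which no evaluation operator, left merge or
communication merge occurs. -/
def IsHTerm (p : PTerm Act S) : Prop := p.Closed ∧ p.NoELC

/-- The actions of deACPei: basic actions, data-parameterized actions, and assignment
actions. -/
inductive PAct (Act : Type) (S : DataSig) : Type where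
  | base : Act → PAct Act S
  | param : Act → (n : ℕ) → (Fin n → DTerm S) → PAct Act S
  | asg : FlexVar → DTerm S → PAct Act S

/-- The process term corresponding to an action. -/
def PAct.toP : PAct Act S → PTerm Act S
  | .base a => .act a
  | .param a n es => .pact a n es
  | .asg v e => .assign v e

/-- An action all of whose data parameters are closed data terms. -/
def PAct.Closed : PAct Act S → Prop
  | .base _ => True
  | .param _ _ es => ∀ i, (es i).NoDVar
  | .asg _ e => e.NoDVar

/-- The condition `e₁ = e'₁ ∧ … ∧ eₙ = e'ₙ`. -/
def eqConj {n : ℕ} (es es' : Fin n → DTerm S) : CTerm S :=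
  (List.ofFn fun i => CTerm.eq (es i) (es' i)).foldr .and .tt

end DeACPei
namespace DeACPei

variable {S : DataSig} {Act : Type}

/-- Derivability of equations between data terms: equational logic together with the
axiom IMP1 (`e = e'` for data terms without data variables that are equal in the data
algebra, flexible variables being read as data variables). -/
inductive DerivD (A : DataAlg S) : DTerm S → DTerm S → Prop where
  | refl (e) : DerivD A e e
  | symm : DerivD A e e' → DerivD A e' e
  | trans : DerivD A e e' → DerivD A e' e'' → DerivD A e e''
  | congr (f) {ts ts' : Fin (S.ar f) → DTerm S} :
      (∀ i, DerivD A (ts i) (ts' i)) → DerivD A (.app f ts) (.app f ts')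
  | imp1 {e e' : DTerm S} : e.NoDVar → e'.NoDVar →
      (∀ ν μ, e.evalD A ν μ = e'.evalD A ν μ) → DerivD A e e'

/-- Derivability of equations between conditions: equational logic together with the
axiom IMP2 (`φ = ψ` for conditions without condition variables such that `φ ↔ ψ` holds
in the data algebra, flexible variables being read as data variables). -/
inductive DerivC (A : DataAlg S) : CTerm S → CTerm S → Prop where
  | refl (φ) : DerivC A φ φ
  | symm : DerivC A φ ψ → DerivC A ψ φ
  | trans : DerivC A φ ψ → DerivC A ψ χ → DerivC A φ χ
  | congr_eq : DerivD A e₁ e₁' → DerivD A e₂ e₂' → DerivC A (.eq e₁ e₂) (.eq e₁' e₂')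
  | congr_rel (r) {ts ts' : Fin (S.rar r) → DTerm S} :
      (∀ i, DerivD A (ts i) (ts' i)) → DerivC A (.rel r ts) (.rel r ts')
  | congr_not : DerivC A φ φ' → DerivC A (.not φ) (.not φ')
  | congr_and : DerivC A φ φ' → DerivC A ψ ψ' → DerivC A (.and φ ψ) (.and φ' ψ')
  | congr_or : DerivC A φ φ' → DerivC A ψ ψ' → DerivC A (.or φ ψ) (.or φ' ψ')
  | congr_imp : DerivC A φ φ' → DerivC A ψ ψ' → DerivC A (.imp φ ψ) (.imp φ' ψ')
  | congr_all (n) : DerivC A φ φ' → DerivC A (.all n φ) (.all n φ')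
  | congr_ex (n) : DerivC A φ φ' → DerivC A (.ex n φ) (.ex n φ')
  | imp2 {φ ψ : CTerm S} : φ.NoCVar → ψ.NoCVar →
      (∀ μ ν, φ.holds A μ ν ↔ ψ.holds A μ ν) → DerivC A φ ψ

/-- Derivability of equations between process terms from the axioms of deACPei. -/
inductive DerivP (γ : Option Act → Option Act → Option Act) (A : DataAlg S) :
    PTerm Act S → PTerm Act S → Prop where
  | refl (p) : DerivP γ A p p
  | symm : DerivP γ A p q → DerivP γ A q p
  | trans : DerivP γ A p q → DerivP γ A q r → DerivP γ A p r
  | congr_pact (a n) {es es' : Fin n → DTerm S} :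
      (∀ i, DerivD A (es i) (es' i)) → DerivP γ A (.pact a n es) (.pact a n es')
  | congr_assign (v) : DerivD A e e' → DerivP γ A (.assign v e) (.assign v e')
  | congr_alt : DerivP γ A p p' → DerivP γ A q q' → DerivP γ A (.alt p q) (.alt p' q')
  | congr_seq : DerivP γ A p p' → DerivP γ A q q' → DerivP γ A (.seq p q) (.seq p' q')
  | congr_iter : DerivP γ A p p' → DerivP γ A q q' → DerivP γ A (.iter p q) (.iter p' q')
  | congr_par : DerivP γ A p p' → DerivP γ A q q' → DerivP γ A (.par p q) (.par p' q')
  | congr_lm : DerivP γ A p p' → DerivP γ A q q' → DerivP γ A (.lm p q) (.lm p' q')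
  | congr_cm : DerivP γ A p p' → DerivP γ A q q' → DerivP γ A (.cm p q) (.cm p' q')
  | congr_encap (H) : DerivP γ A p p' → DerivP γ A (.encap H p) (.encap H p')
  | congr_gc : DerivC A φ φ' → DerivP γ A p p' → DerivP γ A (.gc φ p) (.gc φ' p')
  | congr_eval (σ) : DerivP γ A p p' → DerivP γ A (.eval σ p) (.eval σ p')
  -- A1-A9
  | A1 (x y) : DerivP γ A (.alt x y) (.alt y x)
  | A2 (x y z) : DerivP γ A (.alt (.alt x y) z) (.alt x (.alt y z))
  | A3 (x) : DerivP γ A (.alt x x) x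
  | A4 (x y z) : DerivP γ A (.seq (.alt x y) z) (.alt (.seq x z) (.seq y z))
  | A5 (x y z) : DerivP γ A (.seq (.seq x y) z) (.seq x (.seq y z))
  | A6 (x) : DerivP γ A (.alt x .delta) x
  | A7 (x) : DerivP γ A (.seq .delta x) .delta
  | A8 (x) : DerivP γ A (.seq x .eps) x
  | A9 (x) : DerivP γ A (.seq .eps x) x
  -- iteration
  | BKS1 (x y) : DerivP γ A (.iter x y) (.alt (.seq x (.iter x y)) y)
  | RSP (x y z) : DerivP γ A z (.alt (.seq x z) y) → DerivP γ A z (.iter x y)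
  -- parallel composition
  | CM1T (x y) : DerivP γ A (.par x y)
      (.alt (.alt (.alt (.lm x y) (.lm y x)) (.cm x y))
        (.seq (.encap Set.univ x) (.encap Set.univ y)))
  | CM2T (x) : DerivP γ A (.lm .eps x) .delta
  | CM3 (a : Option Act) (x y) :
      DerivP γ A (.lm (.seq (actd a) x) y) (.seq (actd a) (.par x y))
  | CM3D (a n es x y) :
      DerivP γ A (.lm (.seq (.pact a n es) x) y) (.seq (.pact a n es) (.par x y))
  | CM3A (v e x y) :
      DerivP γ A (.lm (.seq (.assign v e) x) y) (.seq (.assign v e) (.par x y))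
  | CM4 (x y z) : DerivP γ A (.lm (.alt x y) z) (.alt (.lm x z) (.lm y z))
  | CM5T (x) : DerivP γ A (.cm .eps x) .delta
  | CM6T (x) : DerivP γ A (.cm x .eps) .delta
  | CM7 (a b : Option Act) (x y) :
      DerivP γ A (.cm (.seq (actd a) x) (.seq (actd b) y))
        (.seq (actd (γ a b)) (.par x y))
  | CM7Da (a b c : Act) (n) (es es' : Fin n → DTerm S) (x y) :
      γ (some a) (some b) = some c →
      DerivP γ A (.cm (.seq (.pact a n es) x) (.seq (.pact b n es') y))
        (.gc (eqConj es es') (.seq (.pact c n es) (.par x y)))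
  | CM7Db_comm (a b : Act) (n m es es' x y) : γ (some a) (some b) = none →
      DerivP γ A (.cm (.seq (.pact a n es) x) (.seq (.pact b m es') y)) .delta
  | CM7Db_len (a b : Act) (n m es es' x y) : n ≠ m →
      DerivP γ A (.cm (.seq (.pact a n es) x) (.seq (.pact b m es') y)) .delta
  | CM7Dc (a : Act) (n es) (b : Option Act) (x y) :
      DerivP γ A (.cm (.seq (.pact a n es) x) (.seq (actd b) y)) .delta
  | CM7Dd (a : Option Act) (b : Act) (n es x y) :
      DerivP γ A (.cm (.seq (actd a) x) (.seq (.pact b n es) y)) .delta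
  | CM5A (v e x y) : DerivP γ A (.cm (.seq (.assign v e) x) y) .delta
  | CM6A (v e x y) : DerivP γ A (.cm x (.seq (.assign v e) y)) .delta
  | CM8 (x y z) : DerivP γ A (.cm (.alt x y) z) (.alt (.cm x z) (.cm y z))
  | CM9 (x y z) : DerivP γ A (.cm x (.alt y z)) (.alt (.cm x y) (.cm x z))
  -- encapsulation
  | D0 (H) : DerivP γ A (.encap H .eps) .eps
  | D1 (H) (a : Option Act) : (∀ b, a = some b → b ∉ H) →
      DerivP γ A (.encap H (actd a)) (actd a)
  | D2 (H) (a : Act) : a ∈ H → DerivP γ A (.encap H (.act a)) .delta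
  | D1D (H) (a : Act) (n es) : a ∉ H →
      DerivP γ A (.encap H (.pact a n es)) (.pact a n es)
  | D2D (H) (a : Act) (n es) : a ∈ H → DerivP γ A (.encap H (.pact a n es)) .delta
  | D1A (H v e) : DerivP γ A (.encap H (.assign v e)) (.assign v e)
  | D3 (H x y) : DerivP γ A (.encap H (.alt x y)) (.alt (.encap H x) (.encap H y))
  | D4 (H x y) : DerivP γ A (.encap H (.seq x y)) (.seq (.encap H x) (.encap H y))
  -- guarded commands
  | GC1 (x) : DerivP γ A (.gc .tt x) x
  | GC2 (x) : DerivP γ A (.gc .ff x) .delta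
  | GC3 (φ) : DerivP γ A (.gc φ .delta) .delta
  | GC4 (φ x y) : DerivP γ A (.gc φ (.alt x y)) (.alt (.gc φ x) (.gc φ y))
  | GC5 (φ x y) : DerivP γ A (.seq (.gc φ x) y) (.gc φ (.seq x y))
  | GC6 (φ ψ x) : DerivP γ A (.gc φ (.gc ψ x)) (.gc (.and φ ψ) x)
  | GC7 (φ ψ x) : DerivP γ A (.gc (.or φ ψ) x) (.alt (.gc φ x) (.gc ψ x))
  | GC8 (φ x y) : DerivP γ A (.lm (.gc φ x) y) (.gc φ (.lm x y))
  | GC9 (φ x y) : DerivP γ A (.cm (.gc φ x) y) (.gc φ (.cm x y))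
  | GC10 (φ x y) : DerivP γ A (.cm x (.gc φ y)) (.gc φ (.cm x y))
  | GC11 (H φ x) : DerivP γ A (.encap H (.gc φ x)) (.gc φ (.encap H x))
  -- evaluation
  | V0 (σ) : DerivP γ A (.eval σ .eps) .eps
  | V1 (σ) (a : Option Act) (x) :
      DerivP γ A (.eval σ (.seq (actd a) x)) (.seq (actd a) (.eval σ x))
  | V2 (σ a n es x) : DerivP γ A (.eval σ (.seq (.pact a n es) x))
      (.seq (.pact a n fun i => (es i).applyEval σ) (.eval σ x))
  | V3 (σ v e x) : DerivP γ A (.eval σ (.seq (.assign v e) x))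
      (.seq (.assign v (e.applyEval σ)) (.eval (σ.upd v (e.applyEval σ)) x))
  | V4 (σ x y) : DerivP γ A (.eval σ (.alt x y)) (.alt (.eval σ x) (.eval σ y))
  | V5 (σ φ x) : DerivP γ A (.eval σ (.gc φ x)) (.gc (φ.applyEval σ) (.eval σ x))

/-- Equivalence under `V`-evaluation: `V_σ(p) = V_σ(q)` is derivable for every
`V`-evaluation map `σ`. -/
def EvalEquiv (γ : Option Act → Option Act → Option Act) (A : DataAlg S)
    (V : Finset FlexVar) (p q : PTerm Act S) : Prop :=
  ∀ σ : EvalMap S, σ.IsVMap V → DerivP γ A (.eval σ p) (.eval σ q)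

/-- A data algebra is minimal if every element is the value of a closed term over the
data signature. -/
def DataAlg.Minimal (A : DataAlg S) : Prop :=
  ∀ d : A.D, ∃ e : DTerm S, e.IsVal ∧ ∀ ν μ, e.evalD A ν μ = d

end DeACPei

namespace DeACPei

/-- Head normal forms: the least set of closed process terms containing δ, containing
φ:→ε and φ:→(α·p) for closed conditions φ, actions α and closed process terms p, and
closed under alternative composition. -/
inductive HNF {Act : Type} {S : DataSig} : PTerm Act S → Prop where
  | delta : HNF .delta
  | eps (φ : CTerm S) : φ.Closed → HNF (.gc φ .eps)
  | act (φ : CTerm S) (α : PAct Act S) (p : PTerm Act S) :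
      φ.Closed → α.Closed → p.Closed → HNF (.gc φ (.seq α.toP p))
  | alt {p q : PTerm Act S} : HNF p → HNF q → HNF (.alt p q)

section HNFLemmas

variable {Act : Type} {S : DataSig} {γ : Option Act → Option Act → Option Act} {A : DataAlg S}

/-! ### Closedness lemmas -/

lemma DTerm.dvars_eq_empty {e : DTerm S} (h : e.NoDVar) : e.dvars = ∅ := by
  induction e with
  | dvar n => exact absurd h (by simp [DTerm.NoDVar])
  | fvar v => rfl
  | app f ts ih =>
    show (Finset.univ.sup fun i => (ts i).dvars) = ∅
    rw [← Finset.bot_eq_empty, Finset.sup_eq_bot_iff]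
    exact fun i _ => ih i (h i)

lemma DTerm.applyEval_noDVar (σ : EvalMap S) {e : DTerm S} (h : e.NoDVar) :
    (e.applyEval σ).NoDVar := by
  induction e with
  | dvar n => exact absurd h (by simp [DTerm.NoDVar])
  | fvar v =>
    simp only [DTerm.applyEval]
    cases hv : σ v with
    | none => trivial
    | some t => exact t.property.1
  | app f ts ih => exact fun i => ih i (h i)

lemma DTerm.applyEval_dvars (σ : EvalMap S) (e : DTerm S) :
    (e.applyEval σ).dvars = e.dvars := by
  induction e with
  | dvar n => rfl
  | fvar v =>
    simp only [DTerm.applyEval]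
    cases hv : σ v with
    | none => rfl
    | some t => exact DTerm.dvars_eq_empty t.property.1
  | app f ts ih =>
    simp only [DTerm.applyEval, DTerm.dvars]
    exact Finset.sup_congr rfl (fun i _ => ih i)

lemma CTerm.applyEval_noCVar (σ : EvalMap S) {φ : CTerm S} (h : φ.NoCVar) :
    (φ.applyEval σ).NoCVar := by
  induction φ with
  | cvar n => exact h
  | eq e e' => trivial
  | rel r ts => trivial
  | tt => trivial
  | ff => trivial
  | not φ ih => exact ih h
  | and φ ψ ih ih' => exact ⟨ih h.1, ih' h.2⟩
  | or φ ψ ih ih' => exact ⟨ih h.1, ih' h.2⟩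
  | imp φ ψ ih ih' => exact ⟨ih h.1, ih' h.2⟩
  | all n φ ih => exact ih h
  | ex n φ ih => exact ih h

lemma CTerm.applyEval_fdvars (σ : EvalMap S) (φ : CTerm S) :
    (φ.applyEval σ).fdvars = φ.fdvars := by
  induction φ with
  | cvar n => rfl
  | eq e e' => simp [CTerm.applyEval, CTerm.fdvars, DTerm.applyEval_dvars]
  | rel r ts =>
    simp only [CTerm.applyEval, CTerm.fdvars]
    exact Finset.sup_congr rfl (fun i _ => DTerm.applyEval_dvars σ (ts i))
  | tt => rfl
  | ff => rfl
  | not φ ih => exact ih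
  | and φ ψ ih ih' => simp [CTerm.applyEval, CTerm.fdvars, ih, ih']
  | or φ ψ ih ih' => simp [CTerm.applyEval, CTerm.fdvars, ih, ih']
  | imp φ ψ ih ih' => simp [CTerm.applyEval, CTerm.fdvars, ih, ih']
  | all n φ ih => simp [CTerm.applyEval, CTerm.fdvars, ih]
  | ex n φ ih => simp [CTerm.applyEval, CTerm.fdvars, ih]

lemma CTerm.applyEval_closed (σ : EvalMap S) {φ : CTerm S} (h : φ.Closed) :
    (φ.applyEval σ).Closed :=
  ⟨CTerm.applyEval_noCVar σ h.1, by rw [CTerm.applyEval_fdvars]; exact h.2⟩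

lemma closed_tt : (CTerm.tt (S := S)).Closed := ⟨trivial, rfl⟩
lemma closed_ff : (CTerm.ff (S := S)).Closed := ⟨trivial, rfl⟩

lemma closed_and {φ ψ : CTerm S} (h : φ.Closed) (h' : ψ.Closed) :
    (CTerm.and φ ψ).Closed :=
  ⟨⟨h.1, h'.1⟩, by simp [CTerm.fdvars, h.2, h'.2]⟩

lemma closed_or {φ ψ : CTerm S} (h : φ.Closed) (h' : ψ.Closed) :
    (CTerm.or φ ψ).Closed :=
  ⟨⟨h.1, h'.1⟩, by simp [CTerm.fdvars, h.2, h'.2]⟩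

lemma foldr_and_closed (l : List (CTerm S)) (h : ∀ φ ∈ l, φ.Closed) :
    (l.foldr CTerm.and CTerm.tt).Closed := by
  induction l with
  | nil => exact closed_tt
  | cons hd tl ih =>
    exact closed_and (h hd List.mem_cons_self)
      (ih fun φ hφ => h φ (List.mem_cons_of_mem _ hφ))

lemma eqConj_closed {n : ℕ} {es es' : Fin n → DTerm S}
    (h : ∀ i, (es i).NoDVar) (h' : ∀ i, (es' i).NoDVar) :
    (eqConj es es').Closed := by
  apply foldr_and_closed
  intro φ hφ
  rw [List.mem_ofFn] at hφ
  obtain ⟨i, rfl⟩ := hφ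
  exact ⟨trivial, by simp [CTerm.fdvars, DTerm.dvars_eq_empty (h i),
    DTerm.dvars_eq_empty (h' i)]⟩

lemma PAct.toP_closed {α : PAct Act S} (h : α.Closed) : α.toP.Closed := by
  cases α <;> exact h

lemma HNF.closed {p : PTerm Act S} (h : HNF p) : p.Closed := by
  induction h with
  | delta => trivial
  | eps φ hφ => exact ⟨hφ, trivial⟩
  | act φ α p hφ hα hp => exact ⟨hφ, PAct.toP_closed hα, hp⟩
  | alt h1 h2 ih1 ih2 => exact ⟨ih1, ih2⟩

/-! ### Head normal form closure lemmas -/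

lemma hnf_gc {φ : CTerm S} (hφ : φ.Closed) {p : PTerm Act S} (hp : HNF p) :
    ∃ r : PTerm Act S, HNF r ∧ DerivP γ A (.gc φ p) r := by
  induction hp with
  | delta => exact ⟨.delta, .delta, .GC3 φ⟩
  | eps ψ hψ => exact ⟨_, .eps _ (closed_and hφ hψ), .GC6 φ ψ .eps⟩
  | act ψ α p hψ hα hp =>
    exact ⟨_, .act _ α p (closed_and hφ hψ) hα hp, .GC6 φ ψ _⟩
  | alt h1 h2 ih1 ih2 =>
    obtain ⟨r1, h1', d1⟩ := ih1
    obtain ⟨r2, h2', d2⟩ := ih2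
    exact ⟨.alt r1 r2, .alt h1' h2', (DerivP.GC4 ..).trans (DerivP.congr_alt d1 d2)⟩

lemma hnf_seq {p q : PTerm Act S} (hp : HNF p) (hq : HNF q) :
    ∃ r : PTerm Act S, HNF r ∧ DerivP γ A (.seq p q) r := by
  induction hp with
  | delta => exact ⟨.delta, .delta, .A7 q⟩
  | eps φ hφ =>
    obtain ⟨r, hr, dr⟩ := hnf_gc (γ := γ) (A := A) hφ hq
    exact ⟨r, hr, ((DerivP.GC5 ..).trans (DerivP.congr_gc (.refl φ) (.A9 q))).trans dr⟩
  | act φ α p' hφ hα hp' =>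
    refine ⟨.gc φ (.seq α.toP (.seq p' q)),
      .act φ α _ hφ hα ⟨hp', hq.closed⟩, ?_⟩
    exact (DerivP.GC5 ..).trans (DerivP.congr_gc (.refl φ) (.A5 ..))
  | alt h1 h2 ih1 ih2 =>
    obtain ⟨r1, h1', d1⟩ := ih1
    obtain ⟨r2, h2', d2⟩ := ih2
    exact ⟨.alt r1 r2, .alt h1' h2', (DerivP.A4 ..).trans (DerivP.congr_alt d1 d2)⟩

lemma hnf_encap (H : Set Act) {p : PTerm Act S} (hp : HNF p) :
    ∃ r : PTerm Act S, HNF r ∧ DerivP γ A (.encap H p) r := by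
  induction hp with
  | delta => exact ⟨.delta, .delta, DerivP.D1 H none (fun b hb => by cases hb)⟩
  | eps φ hφ =>
    exact ⟨_, .eps φ hφ, (DerivP.GC11 ..).trans (DerivP.congr_gc (.refl φ) (.D0 H))⟩
  | act φ α p' hφ hα hp' =>
    have dstart : DerivP γ A (.encap H (.gc φ (.seq α.toP p')))
        (.gc φ (.seq (.encap H α.toP) (.encap H p'))) :=
      (DerivP.GC11 ..).trans (DerivP.congr_gc (.refl φ) (.D4 ..))
    cases α with
    | base a =>
      by_cases ha : a ∈ H
      · refine ⟨.delta, .delta, dstart.trans ?_⟩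
        exact (DerivP.congr_gc (.refl φ)
          ((DerivP.congr_seq (DerivP.D2 H a ha) (.refl _)).trans (.A7 _))).trans (.GC3 φ)
      · refine ⟨.gc φ (.seq (PAct.base a).toP (.encap H p')),
          .act φ (.base a) _ hφ trivial hp', dstart.trans ?_⟩
        exact DerivP.congr_gc (.refl φ) (DerivP.congr_seq
          (DerivP.D1 H (some a) (fun b hb => by cases hb; exact ha)) (.refl _))
    | param a n es =>
      by_cases ha : a ∈ H
      · refine ⟨.delta, .delta, dstart.trans ?_⟩
        exact (DerivP.congr_gc (.refl φ)
          ((DerivP.congr_seq (DerivP.D2D H a n es ha) (.refl _)).trans (.A7 _))).trans (.GC3 φ)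
      · refine ⟨.gc φ (.seq (PAct.param a n es).toP (.encap H p')),
          .act φ (.param a n es) _ hφ hα hp', dstart.trans ?_⟩
        exact DerivP.congr_gc (.refl φ) (DerivP.congr_seq (DerivP.D1D H a n es ha) (.refl _))
    | asg v e =>
      refine ⟨.gc φ (.seq (PAct.asg v e).toP (.encap H p')),
        .act φ (.asg v e) _ hφ hα hp', dstart.trans ?_⟩
      exact DerivP.congr_gc (.refl φ) (DerivP.congr_seq (DerivP.D1A H v e) (.refl _))
  | alt h1 h2 ih1 ih2 =>
    obtain ⟨r1, h1', d1⟩ := ih1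
    obtain ⟨r2, h2', d2⟩ := ih2
    exact ⟨.alt r1 r2, .alt h1' h2', (DerivP.D3 ..).trans (DerivP.congr_alt d1 d2)⟩

lemma hnf_lm {p q : PTerm Act S} (hp : HNF p) (hq : q.Closed) :
    ∃ r : PTerm Act S, HNF r ∧ DerivP γ A (.lm p q) r := by
  induction hp with
  | delta =>
    refine ⟨.delta, .delta, ?_⟩
    exact (DerivP.congr_lm (DerivP.GC2 .eps).symm (.refl q)).trans
      ((DerivP.GC8 ..).trans ((DerivP.congr_gc (.refl _) (.CM2T q)).trans (.GC3 _)))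
  | eps φ hφ =>
    exact ⟨.delta, .delta,
      (DerivP.GC8 ..).trans ((DerivP.congr_gc (.refl φ) (.CM2T q)).trans (.GC3 φ))⟩
  | act φ α p' hφ hα hp' =>
    refine ⟨.gc φ (.seq α.toP (.par p' q)), .act φ α _ hφ hα ⟨hp', hq⟩, ?_⟩
    refine (DerivP.GC8 ..).trans (DerivP.congr_gc (.refl φ) ?_)
    cases α with
    | base a => exact DerivP.CM3 (some a) p' q
    | param a n es => exact DerivP.CM3D a n es p' q
    | asg v e => exact DerivP.CM3A v e p' q
  | alt h1 h2 ih1 ih2 =>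
    obtain ⟨r1, h1', d1⟩ := ih1
    obtain ⟨r2, h2', d2⟩ := ih2
    exact ⟨.alt r1 r2, .alt h1' h2', (DerivP.CM4 ..).trans (DerivP.congr_alt d1 d2)⟩

lemma hnf_cm_core (α β : PAct Act S) (hα : α.Closed) (hβ : β.Closed)
    {x y : PTerm Act S} (hx : x.Closed) (hy : y.Closed) :
    ∃ r : PTerm Act S, HNF r ∧ DerivP γ A (.cm (.seq α.toP x) (.seq β.toP y)) r := by
  cases α with
  | asg v e => exact ⟨.delta, .delta, .CM5A v e x _⟩
  | base a =>
    cases β with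
    | asg v e => exact ⟨.delta, .delta, .CM6A v e _ y⟩
    | param b m es => exact ⟨.delta, .delta, .CM7Dd (some a) b m es x y⟩
    | base b =>
      have d := DerivP.CM7 (γ := γ) (A := A) (some a) (some b) x y
      cases hc : γ (some a) (some b) with
      | none =>
        rw [hc] at d
        exact ⟨.delta, .delta, d.trans (.A7 _)⟩
      | some c =>
        rw [hc] at d
        exact ⟨.gc .tt (.seq (PAct.base c).toP (.par x y)),
          .act .tt (.base c) _ closed_tt trivial ⟨hx, hy⟩, d.trans (DerivP.GC1 _).symm⟩
  | param a n es =>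
    cases β with
    | asg v e => exact ⟨.delta, .delta, .CM6A v e _ y⟩
    | base b => exact ⟨.delta, .delta, .CM7Dc a n es (some b) x y⟩
    | param b m es' =>
      by_cases hnm : n = m
      · subst hnm
        cases hc : γ (some a) (some b) with
        | none => exact ⟨.delta, .delta, .CM7Db_comm a b n n es es' x y hc⟩
        | some c =>
          exact ⟨.gc (eqConj es es') (.seq (PAct.param c n es).toP (.par x y)),
            .act _ (.param c n es) _ (eqConj_closed hα hβ) hα ⟨hx, hy⟩,
            .CM7Da a b c n es es' x y hc⟩
      · exact ⟨.delta, .delta, .CM7Db_len a b n m es es' x y hnm⟩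

lemma hnf_cm_right (α : PAct Act S) (hα : α.Closed) {x : PTerm Act S} (hx : x.Closed)
    {q : PTerm Act S} (hq : HNF q) :
    ∃ r : PTerm Act S, HNF r ∧ DerivP γ A (.cm (.seq α.toP x) q) r := by
  induction hq with
  | delta =>
    refine ⟨.delta, .delta, ?_⟩
    exact (DerivP.congr_cm (.refl _) (DerivP.GC2 .eps).symm).trans
      ((DerivP.GC10 ..).trans ((DerivP.congr_gc (.refl _) (.CM6T _)).trans (.GC3 _)))
  | eps ψ hψ =>
    exact ⟨.delta, .delta,
      (DerivP.GC10 ..).trans ((DerivP.congr_gc (.refl ψ) (.CM6T _)).trans (.GC3 ψ))⟩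
  | act ψ β y hψ hβ hy =>
    obtain ⟨r, hr, dr⟩ := hnf_cm_core (γ := γ) (A := A) α β hα hβ hx hy
    obtain ⟨r', hr', dr'⟩ := hnf_gc (γ := γ) (A := A) hψ hr
    exact ⟨r', hr', (DerivP.GC10 ..).trans ((DerivP.congr_gc (.refl ψ) dr).trans dr')⟩
  | alt h1 h2 ih1 ih2 =>
    obtain ⟨r1, h1', d1⟩ := ih1
    obtain ⟨r2, h2', d2⟩ := ih2
    exact ⟨.alt r1 r2, .alt h1' h2', (DerivP.CM9 ..).trans (DerivP.congr_alt d1 d2)⟩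

lemma hnf_cm {p q : PTerm Act S} (hp : HNF p) (hq : HNF q) :
    ∃ r : PTerm Act S, HNF r ∧ DerivP γ A (.cm p q) r := by
  induction hp with
  | delta =>
    refine ⟨.delta, .delta, ?_⟩
    exact (DerivP.congr_cm (DerivP.GC2 .eps).symm (.refl q)).trans
      ((DerivP.GC9 ..).trans ((DerivP.congr_gc (.refl _) (.CM5T q)).trans (.GC3 _)))
  | eps φ hφ =>
    exact ⟨.delta, .delta,
      (DerivP.GC9 ..).trans ((DerivP.congr_gc (.refl φ) (.CM5T q)).trans (.GC3 φ))⟩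
  | act φ α x hφ hα hx =>
    obtain ⟨r, hr, dr⟩ := hnf_cm_right (γ := γ) (A := A) α hα hx hq
    obtain ⟨r', hr', dr'⟩ := hnf_gc (γ := γ) (A := A) hφ hr
    exact ⟨r', hr', (DerivP.GC9 ..).trans ((DerivP.congr_gc (.refl φ) dr).trans dr')⟩
  | alt h1 h2 ih1 ih2 =>
    obtain ⟨r1, h1', d1⟩ := ih1
    obtain ⟨r2, h2', d2⟩ := ih2
    exact ⟨.alt r1 r2, .alt h1' h2', (DerivP.CM8 ..).trans (DerivP.congr_alt d1 d2)⟩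

lemma alt_perm (a b c d : PTerm Act S) :
    DerivP γ A (.alt (.alt a b) (.alt c d)) (.alt (.alt a c) (.alt b d)) :=
  (DerivP.A2 ..).trans <|
    (DerivP.congr_alt (.refl a) (DerivP.A2 b c d).symm).trans <|
      (DerivP.congr_alt (.refl a) (DerivP.congr_alt (.A1 b c) (.refl d))).trans <|
        (DerivP.congr_alt (.refl a) (.A2 c b d)).trans (DerivP.A2 a c (.alt b d)).symm

lemma hnf_split {z : PTerm Act S} (hz : z.Closed) {p : PTerm Act S} (hp : HNF p) :
    ∃ (Φ : CTerm S) (w : PTerm Act S), Φ.Closed ∧ HNF w ∧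
      DerivP γ A (.seq p z) (.alt (.seq (.gc Φ .eps) z) w) := by
  induction hp with
  | delta =>
    refine ⟨.ff, .delta, closed_ff, .delta, ?_⟩
    exact (DerivP.A7 z).trans
      ((DerivP.A6 _).trans ((DerivP.GC5 ..).trans (.GC2 _))).symm
  | eps φ hφ => exact ⟨φ, .delta, hφ, .delta, (DerivP.A6 _).symm⟩
  | act φ α p' hφ hα hp' =>
    refine ⟨.ff, .gc φ (.seq α.toP (.seq p' z)), closed_ff,
      .act φ α _ hφ hα ⟨hp', hz⟩, ?_⟩
    have dL : DerivP γ A (.seq (.gc φ (.seq α.toP p')) z)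
        (.gc φ (.seq α.toP (.seq p' z))) :=
      (DerivP.GC5 ..).trans (DerivP.congr_gc (.refl φ) (.A5 ..))
    have dR : DerivP γ A
        (.alt (.seq (.gc .ff .eps) z) (.gc φ (.seq α.toP (.seq p' z))))
        (.gc φ (.seq α.toP (.seq p' z))) :=
      (DerivP.congr_alt ((DerivP.GC5 ..).trans (.GC2 _)) (.refl _)).trans
        ((DerivP.A1 ..).trans (.A6 _))
    exact dL.trans dR.symm
  | alt h1 h2 ih1 ih2 =>
    obtain ⟨Φ1, w1, hΦ1, hw1, d1⟩ := ih1
    obtain ⟨Φ2, w2, hΦ2, hw2, d2⟩ := ih2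
    refine ⟨.or Φ1 Φ2, .alt w1 w2, closed_or hΦ1 hΦ2, .alt hw1 hw2, ?_⟩
    have dE : DerivP γ A (.seq (.gc (.or Φ1 Φ2) .eps) z)
        (.alt (.seq (.gc Φ1 .eps) z) (.seq (.gc Φ2 .eps) z)) :=
      (DerivP.congr_seq (.GC7 ..) (.refl z)).trans (.A4 ..)
    exact (DerivP.A4 ..).trans <| (DerivP.congr_alt d1 d2).trans <|
      (alt_perm ..).trans (DerivP.congr_alt dE.symm (.refl _))
  
lemma hnf_eval (σ : EvalMap S) {p : PTerm Act S} (hp : HNF p) :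
    ∃ r : PTerm Act S, HNF r ∧ DerivP γ A (.eval σ p) r := by
  induction hp with
  | delta =>
    refine ⟨.delta, .delta, ?_⟩
    exact (DerivP.congr_eval σ (DerivP.GC2 .eps).symm).trans
      ((DerivP.V5 σ .ff .eps).trans ((DerivP.congr_gc (.refl _) (.V0 σ)).trans (.GC2 _)))
  | eps φ hφ =>
    exact ⟨_, .eps _ (CTerm.applyEval_closed σ hφ),
      (DerivP.V5 σ φ .eps).trans (DerivP.congr_gc (.refl _) (.V0 σ))⟩
  | act φ α p' hφ hα hp' =>
    have hφ' := CTerm.applyEval_closed σ hφ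
    cases α with
    | base a =>
      exact ⟨.gc (φ.applyEval σ) (.seq (PAct.base a).toP (.eval σ p')),
        .act _ (.base a) _ hφ' trivial hp',
        (DerivP.V5 σ φ _).trans (DerivP.congr_gc (.refl _) (.V1 σ (some a) p'))⟩
    | param a n es =>
      exact ⟨.gc (φ.applyEval σ)
          (.seq (PAct.param a n (fun i => (es i).applyEval σ)).toP (.eval σ p')),
        .act _ (.param a n _) _ hφ' (fun i => DTerm.applyEval_noDVar σ (hα i)) hp',
        (DerivP.V5 σ φ _).trans (DerivP.congr_gc (.refl _) (.V2 σ a n es p'))⟩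
    | asg v e =>
      exact ⟨.gc (φ.applyEval σ)
          (.seq (PAct.asg v (e.applyEval σ)).toP (.eval (σ.upd v (e.applyEval σ)) p')),
        .act _ (.asg v _) _ hφ' (DTerm.applyEval_noDVar σ hα) hp',
        (DerivP.V5 σ φ _).trans (DerivP.congr_gc (.refl _) (.V3 σ v e p'))⟩
  | alt h1 h2 ih1 ih2 =>
    obtain ⟨r1, h1', d1⟩ := ih1
    obtain ⟨r2, h2', d2⟩ := ih2
    exact ⟨.alt r1 r2, .alt h1' h2', (DerivP.V4 ..).trans (DerivP.congr_alt d1 d2)⟩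

end HNFLemmas

/-- For every closed process term p of deACPei there is a head normal form q such that
p = q is derivable from the axioms of deACPei. -/
theorem head_normal_form {Act : Type} [Fintype Act] {γ : Option Act → Option Act → Option Act}
    (hγcomm : ∀ a b, γ a b = γ b a)
    (hγassoc : ∀ a b c, γ (γ a b) c = γ a (γ b c))
    (hγdelta : ∀ a, γ none a = none)
    {S : DataSig} (A : DataAlg S) (hmin : A.Minimal) :
    ∀ p : PTerm Act S, p.Closed → ∃ q : PTerm Act S, HNF q ∧ DerivP γ A p q := by
  intro p
  induction p with
  | pvar n => exact fun h => h.elim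
  | delta => exact fun _ => ⟨.delta, .delta, .refl _⟩
  | eps => exact fun _ => ⟨.gc .tt .eps, .eps _ closed_tt, (DerivP.GC1 _).symm⟩
  | act a =>
    exact fun _ => ⟨.gc .tt (.seq (PAct.base a).toP .eps),
      .act .tt (.base a) .eps closed_tt trivial trivial,
      ((DerivP.GC1 _).trans (.A8 _)).symm⟩
  | pact a n es =>
    exact fun h => ⟨.gc .tt (.seq (PAct.param a n es).toP .eps),
      .act .tt (.param a n es) .eps closed_tt h trivial,
      ((DerivP.GC1 _).trans (.A8 _)).symm⟩
  | assign v e =>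
    exact fun h => ⟨.gc .tt (.seq (PAct.asg v e).toP .eps),
      .act .tt (.asg v e) .eps closed_tt h trivial,
      ((DerivP.GC1 _).trans (.A8 _)).symm⟩
  | alt p q ihp ihq =>
    rintro ⟨hp, hq⟩
    obtain ⟨rp, hrp, dp⟩ := ihp hp
    obtain ⟨rq, hrq, dq⟩ := ihq hq
    exact ⟨.alt rp rq, .alt hrp hrq, DerivP.congr_alt dp dq⟩
  | seq p q ihp ihq =>
    rintro ⟨hp, hq⟩
    obtain ⟨rp, hrp, dp⟩ := ihp hp
    obtain ⟨rq, hrq, dq⟩ := ihq hq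
    obtain ⟨r, hr, dr⟩ := hnf_seq (γ := γ) (A := A) hrp hrq
    exact ⟨r, hr, (DerivP.congr_seq dp dq).trans dr⟩
  | iter x y ihx ihy =>
    rintro ⟨hx, hy⟩
    obtain ⟨px, hpx, dx⟩ := ihx hx
    obtain ⟨ry, hry, dy⟩ := ihy hy
    have hz : (PTerm.iter x y).Closed := ⟨hx, hy⟩
    obtain ⟨Φ, w, hΦ, hw, dsp⟩ := hnf_split (γ := γ) (A := A) hz hpx
    have d0 : DerivP γ A (.iter x y)
        (.alt (.seq (.gc Φ .eps) (.iter x y)) (.alt w ry)) :=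
      (DerivP.BKS1 x y).trans <|
        (DerivP.congr_alt (DerivP.congr_seq dx (.refl _)) dy).trans <|
          (DerivP.congr_alt dsp (.refl ry)).trans (DerivP.A2 ..)
    have dz : DerivP γ A (.iter x y) (.iter (.gc Φ .eps) (.alt w ry)) :=
      DerivP.RSP _ _ _ d0
    have hΦΦ : DerivC A (.and Φ Φ) Φ :=
      DerivC.imp2 ⟨hΦ.1, hΦ.1⟩ hΦ.1 (fun μ ν => by
        constructor
        · exact fun h => h.1
        · exact fun h => ⟨h, h⟩)
    have dE : DerivP γ A
        (.seq (.gc Φ .eps) (.alt (.gc Φ (.alt w ry)) (.alt w ry)))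
        (.gc Φ (.alt w ry)) :=
      (DerivP.GC5 ..).trans <|
        (DerivP.congr_gc (.refl Φ) (.A9 _)).trans <|
          (DerivP.GC4 ..).trans <|
            (DerivP.congr_alt (DerivP.GC6 ..) (.refl _)).trans <|
              (DerivP.congr_alt (DerivP.congr_gc hΦΦ (.refl _)) (.refl _)).trans
                (DerivP.A3 _)
    have du : DerivP γ A (.alt (.gc Φ (.alt w ry)) (.alt w ry))
        (.iter (.gc Φ .eps) (.alt w ry)) :=
      DerivP.RSP _ _ _ ((DerivP.congr_alt dE (.refl _)).symm)
    obtain ⟨r1, hr1, dr1⟩ := hnf_gc (γ := γ) (A := A) hΦ (HNF.alt hw hry)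
    exact ⟨.alt r1 (.alt w ry), .alt hr1 (.alt hw hry),
      (dz.trans du.symm).trans (DerivP.congr_alt dr1 (.refl _))⟩
  | par p q ihp ihq =>
    rintro ⟨hp, hq⟩
    obtain ⟨rp, hrp, dp⟩ := ihp hp
    obtain ⟨rq, hrq, dq⟩ := ihq hq
    obtain ⟨r1, hr1, d1'⟩ := hnf_lm (γ := γ) (A := A) hrp hq
    obtain ⟨r2, hr2, d2'⟩ := hnf_lm (γ := γ) (A := A) hrq hp
    obtain ⟨r3, hr3, d3'⟩ := hnf_cm (γ := γ) (A := A) hrp hrq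
    obtain ⟨e1, he1, de1⟩ := hnf_encap (γ := γ) (A := A) Set.univ hrp
    obtain ⟨e2, he2, de2⟩ := hnf_encap (γ := γ) (A := A) Set.univ hrq
    obtain ⟨r4, hr4, d4'⟩ := hnf_seq (γ := γ) (A := A) he1 he2
    have d1 : DerivP γ A (.lm p q) r1 := (DerivP.congr_lm dp (.refl q)).trans d1'
    have d2 : DerivP γ A (.lm q p) r2 := (DerivP.congr_lm dq (.refl p)).trans d2'
    have d3 : DerivP γ A (.cm p q) r3 := (DerivP.congr_cm dp dq).trans d3'
    have d4 : DerivP γ A (.seq (.encap Set.univ p) (.encap Set.univ q)) r4 :=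
      (DerivP.congr_seq ((DerivP.congr_encap _ dp).trans de1)
        ((DerivP.congr_encap _ dq).trans de2)).trans d4'
    exact ⟨.alt (.alt (.alt r1 r2) r3) r4,
      .alt (.alt (.alt hr1 hr2) hr3) hr4,
      (DerivP.CM1T p q).trans
        (DerivP.congr_alt (DerivP.congr_alt (DerivP.congr_alt d1 d2) d3) d4)⟩
  | lm p q ihp ihq =>
    rintro ⟨hp, hq⟩
    obtain ⟨rp, hrp, dp⟩ := ihp hp
    obtain ⟨r, hr, dr⟩ := hnf_lm (γ := γ) (A := A) hrp hq
    exact ⟨r, hr, (DerivP.congr_lm dp (.refl q)).trans dr⟩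
  | cm p q ihp ihq =>
    rintro ⟨hp, hq⟩
    obtain ⟨rp, hrp, dp⟩ := ihp hp
    obtain ⟨rq, hrq, dq⟩ := ihq hq
    obtain ⟨r, hr, dr⟩ := hnf_cm (γ := γ) (A := A) hrp hrq
    exact ⟨r, hr, (DerivP.congr_cm dp dq).trans dr⟩
  | encap H p ih =>
    intro hp
    obtain ⟨rp, hrp, dp⟩ := ih hp
    obtain ⟨r, hr, dr⟩ := hnf_encap (γ := γ) (A := A) H hrp
    exact ⟨r, hr, (DerivP.congr_encap H dp).trans dr⟩
  | gc φ p ih =>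
    rintro ⟨hφ, hp⟩
    obtain ⟨rp, hrp, dp⟩ := ih hp
    obtain ⟨r, hr, dr⟩ := hnf_gc (γ := γ) (A := A) hφ hrp
    exact ⟨r, hr, (DerivP.congr_gc (.refl φ) dp).trans dr⟩
  | eval σ p ih =>
    intro hp
    obtain ⟨rp, hrp, dp⟩ := ih hp
    obtain ⟨r, hr, dr⟩ := hnf_eval (γ := γ) (A := A) σ hrp
    exact ⟨r, hr, (DerivP.congr_eval σ dp).trans dr⟩


end DeACPei
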